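/- arXiv:2409.05284 — 4 statements merged into one kernel-verified Lean document; each statement's English description precedes it below -/
import Mathlib

section
/- For any real numbers x and y, |σ(x) - σ(y)| ≥ exp(-|x| - 3) · min(1, |x - y|), where σ(z) = 1/(1 + exp(-z)) is the sigmoid function. -/
noncomputable def sigmoid (z : ℝ) : ℝ := 1 / (1 + Real.exp (-z))

lemma sig_mono {a b : ℝ} (h : a ≤ b) : sigmoid a ≤ sigmoid b := by
  unfold sigmoid
  have ha : (0:ℝ) < 1 + Real.exp (-a) := by positivity
  have hb : (0:ℝ) < 1 + Real.exp (-b) := by positivity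
  rw [div_le_div_iff₀ ha hb]
  have := Real.exp_le_exp.mpr (neg_le_neg h)
  linarith

lemma sig_neg (z : ℝ) : sigmoid (-z) = 1 - sigmoid z := by
  unfold sigmoid
  have hz : (0:ℝ) < 1 + Real.exp (-z) := by positivity
  have hz' : (0:ℝ) < 1 + Real.exp z := by positivity
  rw [neg_neg]
  have h : Real.exp (-z) * Real.exp z = 1 := by rw [← Real.exp_add]; simp
  field_simp
  linear_combination -h

-- sub-lemma B
lemma subB (u v : ℝ) (huv : u ≤ v) (h1 : v ≤ u + 1) :
    Real.exp (-|u| - 3) * ((1 + Real.exp (-u)) * (1 + Real.exp (-v))) ≤ Real.exp (-v) := by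
  have he1 : (2:ℝ) < Real.exp 1 := by
    have := Real.exp_one_gt_d9; linarith
  have he2 : Real.exp 1 < 3 := by
    have := Real.exp_one_lt_d9; linarith
  rcases le_or_gt 0 u with hu | hu
  · rw [abs_of_nonneg hu]
    have hv0 : 0 ≤ v := le_trans hu huv
    have h1a : Real.exp (-u) ≤ 1 := Real.exp_le_one_iff.mpr (by linarith)
    have h1b : Real.exp (-v) ≤ 1 := Real.exp_le_one_iff.mpr (by linarith)
    have hp : (1 + Real.exp (-u)) * (1 + Real.exp (-v)) ≤ 4 := by nlinarith [Real.exp_pos (-u), Real.exp_pos (-v)]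
    have key : Real.exp (-u - 3) * 4 ≤ Real.exp (-v) := by
      have : Real.exp (-u - 3) * Real.exp 2 ≤ Real.exp (-v) := by
        rw [← Real.exp_add]
        exact Real.exp_le_exp.mpr (by linarith)
      have h4 : (4:ℝ) ≤ Real.exp 2 := by
        have : Real.exp 2 = Real.exp 1 * Real.exp 1 := by rw [← Real.exp_add]; norm_num
        nlinarith
      nlinarith [Real.exp_pos (-u - 3)]
    nlinarith [Real.exp_pos (-u - 3)]
  · rw [abs_of_neg hu]
    have hv1 : v ≤ 1 := by linarith
    have hev : Real.exp (-1) ≤ Real.exp (-v) := Real.exp_le_exp.mpr (by linarith)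
    have heu : Real.exp u ≤ 1 := Real.exp_le_one_iff.mpr (by linarith)
    have e3 : Real.exp (-(-u) - 3) * (1 + Real.exp (-u)) = Real.exp (u - 3) + Real.exp (-3) := by
      rw [mul_add, mul_one, ← Real.exp_add]; ring_nf
    have hu3 : Real.exp (u - 3) ≤ Real.exp (-3) := Real.exp_le_exp.mpr (by linarith)
    -- need: 2 * exp(-3) * (1 + exp(-v)) ≤ exp(-v)
    have hfin : 2 * Real.exp (-3) * (1 + Real.exp (-v)) ≤ Real.exp (-v) := by
      -- exp(-3) = exp(-1)^3, exp(-v) ≥ exp(-1), exp(-1) ∈ (1/3, 1/2)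
      have hei : Real.exp (-1) = (Real.exp 1)⁻¹ := by rw [← Real.exp_neg]
      have he1pos : (0:ℝ) < Real.exp 1 := Real.exp_pos 1
      have h3 : Real.exp (-3) = Real.exp (-1) * Real.exp (-1) * Real.exp (-1) := by
        rw [← Real.exp_add, ← Real.exp_add]; norm_num
      have hlow : (1:ℝ)/3 < Real.exp (-1) := by
        rw [hei]; rw [div_lt_iff₀ (by norm_num), inv_mul_eq_div, lt_div_iff₀ he1pos]; nlinarith
      have hhigh : Real.exp (-1) < 1/2 := by
        rw [hei, inv_lt_iff_one_lt_mul₀ he1pos]  -- may not exist; fallback below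
        linarith
      set q := Real.exp (-1) with hqdef
      set w := Real.exp (-v) with hwdef
      have hq : 0 < q := Real.exp_pos _
      have hw : 0 < w := Real.exp_pos _
      rw [h3]
      have hq2 : q*q < 1/4 := by nlinarith
      have hq3 : q*q*q < 1/8 := by nlinarith
      have step1 : 2*(q*q*q) ≤ q*(1 - 2*(q*q*q)) := by nlinarith
      have step2 : q*(1 - 2*(q*q*q)) ≤ w*(1 - 2*(q*q*q)) := by nlinarith
      nlinarith
    nlinarith [Real.exp_pos (-v), Real.exp_pos (-3), Real.exp_pos (u-3), Real.exp_pos (-u)]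

-- key lemma
lemma key (u v : ℝ) (huv : u ≤ v) (h1 : v ≤ u + 1) :
    Real.exp (-|u| - 3) * (v - u) ≤ sigmoid v - sigmoid u := by
  have ha : (0:ℝ) < 1 + Real.exp (-u) := by positivity
  have hb : (0:ℝ) < 1 + Real.exp (-v) := by positivity
  have sigdiff : sigmoid v - sigmoid u
      = (Real.exp (-u) - Real.exp (-v)) / ((1 + Real.exp (-u)) * (1 + Real.exp (-v))) := by
    unfold sigmoid
    rw [div_sub_div _ _ hb.ne' ha.ne',
      mul_comm (1 + Real.exp (-v)) (1 + Real.exp (-u))]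
    congr 1
    ring
  rw [sigdiff, le_div_iff₀ (by positivity)]
  have hnum : Real.exp (-v) * (v - u) ≤ Real.exp (-u) - Real.exp (-v) := by
    have h2 : v - u + 1 ≤ Real.exp (v - u) := Real.add_one_le_exp _
    have h3 : Real.exp (-v) * Real.exp (v - u) = Real.exp (-u) := by
      rw [← Real.exp_add]; ring_nf
    nlinarith [Real.exp_pos (-v)]
  have hB := subB u v huv h1
  nlinarith [Real.exp_pos (-|u| - 3), sub_nonneg.mpr huv]

theorem sigmoid_diff_lower_bound (x y : ℝ) :
    Real.exp (-|x| - 3) * min 1 |x - y| ≤ |sigmoid x - sigmoid y| := by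
  have key' : ∀ u v : ℝ, u ≤ v → v ≤ u + 1 →
      Real.exp (-|v| - 3) * (v - u) ≤ sigmoid v - sigmoid u := by
    intro u v huv h1
    have := key (-v) (-u) (by linarith) (by linarith)
    rw [sig_neg, sig_neg, abs_neg] at this
    linarith
  rcases le_total x y with hxy | hxy
  · have habs : |x - y| = y - x := by rw [abs_sub_comm, abs_of_nonneg (by linarith)]
    have hs : |sigmoid x - sigmoid y| = sigmoid y - sigmoid x := by
      rw [abs_sub_comm, abs_of_nonneg (sub_nonneg.mpr (sig_mono hxy))]
    rw [habs, hs]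
    rcases le_or_gt y (x + 1) with h1 | h1
    · have := key x y hxy h1
      have hmin : min 1 (y - x) ≤ y - x := min_le_right _ _
      nlinarith [Real.exp_pos (-|x| - 3)]
    · have hmin : min 1 (y - x) = 1 := min_eq_left (by linarith)
      rw [hmin, mul_one]
      have h2 := key x (x+1) (by linarith) (by linarith)
      have h3 := sig_mono (le_of_lt h1)
      linarith
  · have habs : |x - y| = x - y := abs_of_nonneg (by linarith)
    have hs : |sigmoid x - sigmoid y| = sigmoid x - sigmoid y := by
      rw [abs_of_nonneg (sub_nonneg.mpr (sig_mono hxy))]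
    rw [habs, hs]
    rcases le_or_gt x (y + 1) with h1 | h1
    · have := key' y x hxy h1
      have hmin : min 1 (x - y) ≤ x - y := min_le_right _ _
      nlinarith [Real.exp_pos (-|x| - 3)]
    · have hmin : min 1 (x - y) = 1 := min_eq_left (by linarith)
      rw [hmin, mul_one]
      have h2 := key' (x-1) x (by linarith) (by linarith)
      have h3 := sig_mono (show y ≤ x - 1 by linarith)
      linarith
end

section
/- If x and y are real numbers with |x| ≤ λ and |y| ≤ λ, then |σ(x) - σ(y)| ≥ (exp(-λ)/4) · |x - y|, where σ is the sigmoid function. -/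
lemma sigmoid_hasDerivAt (z : ℝ) :
    HasDerivAt sigmoid (Real.exp (-z) / (1 + Real.exp (-z)) ^ 2) z := by
  have h1 : HasDerivAt (fun t : ℝ => Real.exp (-t)) (-Real.exp (-z)) z := by
    simpa [Function.comp_def] using (Real.hasDerivAt_exp (-z)).comp z (hasDerivAt_neg z)
  have h2 : HasDerivAt (fun t : ℝ => 1 + Real.exp (-t)) (-Real.exp (-z)) z :=
    h1.const_add 1
  have hne : (1 : ℝ) + Real.exp (-z) ≠ 0 := by positivity
  have h3 : HasDerivAt (fun t : ℝ => (1 + Real.exp (-t))⁻¹) (- -Real.exp (-z) / (1 + Real.exp (-z)) ^ 2) z := h2.inv hne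
  have : sigmoid = fun t : ℝ => (1 + Real.exp (-t))⁻¹ := by
    funext t; simp [sigmoid, one_div]
  rw [this]
  convert h3 using 1
  ring

lemma deriv_lb (lam z : ℝ) (hz : |z| ≤ lam) :
    Real.exp (-lam) / 4 ≤ Real.exp (-z) / (1 + Real.exp (-z)) ^ 2 := by
  have h1 : Real.exp (-lam) ≤ Real.exp (-z) := Real.exp_le_exp.2 (by
    have := abs_le.1 hz; linarith [this.2])
  have h2 : Real.exp (-z) ≤ Real.exp lam := Real.exp_le_exp.2 (by
    have := abs_le.1 hz; linarith [this.1])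
  have h3 : Real.exp lam * Real.exp (-lam) = 1 := by
    rw [← Real.exp_add]; simp
  have h4 : (1:ℝ) ≤ Real.exp lam := Real.one_le_exp (by linarith [abs_nonneg z])
  have hp : (0:ℝ) < 1 + Real.exp (-z) := by positivity
  rw [div_le_div_iff₀ (by norm_num) (by positivity)]
  have he : 0 < Real.exp (-lam) := Real.exp_pos _
  nlinarith [Real.exp_pos (-z), sq_nonneg (Real.exp (-z) - 1),
    mul_pos he (Real.exp_pos (-z))]

lemma sigmoid_lb (lam x y : ℝ) (hx : |x| ≤ lam) (hy : |y| ≤ lam) (hxy : x ≤ y) :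
    Real.exp (-lam) / 4 * (y - x) ≤ sigmoid y - sigmoid x := by
  rcases eq_or_lt_of_le hxy with rfl | hlt
  · simp
  · obtain ⟨c, hc, hcd⟩ := exists_hasDerivAt_eq_slope sigmoid
      (fun z => Real.exp (-z) / (1 + Real.exp (-z)) ^ 2) hlt
      (fun z _ => (sigmoid_hasDerivAt z).continuousAt.continuousWithinAt)
      (fun z _ => sigmoid_hasDerivAt z)
    have hcb : |c| ≤ lam := by
      rw [abs_le] at hx hy ⊢
      constructor <;> [linarith [hc.1, hx.1]; linarith [hc.2, hy.2]]
    have := deriv_lb lam c hcb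
    rw [hcd] at this
    have hpos : 0 < y - x := by linarith
    rw [le_div_iff₀ hpos] at this
    exact this
theorem sigmoid_diff_lower_bound_bounded (lam x y : ℝ) (hlam : 0 ≤ lam)
    (hx : |x| ≤ lam) (hy : |y| ≤ lam) :
    Real.exp (-lam) / 4 * |x - y| ≤ |sigmoid x - sigmoid y| := by
  rcases le_total x y with h | h
  · have := sigmoid_lb lam x y hx hy h
    have h0 : (0:ℝ) ≤ sigmoid y - sigmoid x :=
      le_trans (mul_nonneg (by positivity) (by linarith)) this
    rw [abs_sub_comm x y, abs_of_nonneg (by linarith : (0:ℝ) ≤ y - x),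
      abs_sub_comm, abs_of_nonneg h0]
    exact this
  · have := sigmoid_lb lam y x hy hx h
    have h0 : (0:ℝ) ≤ sigmoid x - sigmoid y :=
      le_trans (mul_nonneg (by positivity) (by linarith)) this
    rw [abs_of_nonneg (by linarith : (0:ℝ) ≤ x - y),
      abs_of_nonneg h0]
    exact this
end

section
/- Let μ be a δ-unbiased distribution on {-1,1}^n and let f : {-1,1}^n → ℝ be a multilinear polynomial. If I ⊆ [n] is a maximal nonzero monomial of f (i.e., f̂(I) ≠ 0 and f̂(T) = 0 for every strict superset T of I), then Pr_{X∼μ}(|f(X)| ≥ |f̂(I)|) ≥ δ^{|I|}. -/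
open Finset

/-- The value `±1` associated to a Boolean coordinate. -/
def chi (b : Bool) : ℝ := if b then 1 else -1


lemma prod_chi_update {n : ℕ} (i : Fin n) (x : Fin n → Bool) (b : Bool)
    {T : Finset (Fin n)} (hi : i ∉ T) :
    ∏ j ∈ T, chi (Function.update x i b j) = ∏ j ∈ T, chi (x j) :=
  Finset.prod_congr rfl fun j hj => by
    rw [Function.update_of_ne (by rintro rfl; exact hi hj)]

lemma sum_split_pair {n : ℕ} (i : Fin n) (F : (Fin n → Bool) → ℝ) :
    ∑ x, F x =
      ∑ x ∈ univ.filter (fun x => x i = true), (F x + F (Function.update x i false)) := by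
  classical
  rw [Finset.sum_add_distrib]
  rw [← Finset.sum_filter_add_sum_filter_not univ (fun x => x i = true) F]
  congr 1
  refine Finset.sum_bij' (fun x _ => Function.update x i true)
    (fun x _ => Function.update x i false) ?_ ?_ ?_ ?_ ?_
  · intro a ha; simp
  · intro a ha; simp
  · intro a ha; simp at ha
    show Function.update (Function.update a i true) i false = a
    rw [Function.update_idem, show false = a i from ha.symm]
    exact Function.update_eq_self i a
  · intro a ha; simp at ha
    show Function.update (Function.update a i false) i true = a
    rw [Function.update_idem, show true = a i from ha.symm]
    exact Function.update_eq_self i a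
  · intro a ha; simp at ha
    show F a = F (Function.update (Function.update a i true) i false)
    rw [Function.update_idem, show false = a i from ha.symm, Function.update_eq_self i a]

/-- Anti-concentration for δ-unbiased distributions (Lemma 6.1 of Klivans–Meka):
if `μ` (with pmf `p`) is δ-unbiased on `{-1,1}^n` and `I` is a maximal nonzero
monomial of the multilinear polynomial with coefficients `fhat`, then
`Pr(|f(X)| ≥ |f̂(I)|) ≥ δ^{|I|}`. -/
theorem unbiased_anticoncentration (n : ℕ) (δ : ℝ) (hδ : 0 ≤ δ)
    (p : (Fin n → Bool) → ℝ) (hp : ∀ x, 0 ≤ p x) (hsum : ∑ x, p x = 1)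
    (hunb : ∀ (i : Fin n) (x : Fin n → Bool),
      δ * (p (Function.update x i true) + p (Function.update x i false)) ≤ p x ∧
      p x ≤ (1 - δ) * (p (Function.update x i true) + p (Function.update x i false)))
    (fhat : Finset (Fin n) → ℝ) (I : Finset (Fin n))
    (hI : fhat I ≠ 0) (hmax : ∀ T : Finset (Fin n), I ⊂ T → fhat T = 0) :
    δ ^ I.card ≤
      ∑ x ∈ univ.filter (fun x : Fin n → Bool =>
        |fhat I| ≤ |∑ T : Finset (Fin n), fhat T * ∏ i ∈ T, chi (x i)|), p x := by
  suffices H : ∀ (k : ℕ) (fhat : Finset (Fin n) → ℝ) (I : Finset (Fin n)),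
      I.card = k → fhat I ≠ 0 → (∀ T : Finset (Fin n), I ⊂ T → fhat T = 0) →
      δ ^ I.card ≤ ∑ x ∈ univ.filter (fun x : Fin n → Bool =>
        |fhat I| ≤ |∑ T : Finset (Fin n), fhat T * ∏ i ∈ T, chi (x i)|), p x by
    exact H I.card fhat I rfl hI hmax
  intro k
  induction k with
  | zero =>
    intro fhat I hcard hI hmax
    have hIe : I = ∅ := Finset.card_eq_zero.mp hcard
    subst hIe
    have hval : ∀ x : Fin n → Bool,
        (∑ T : Finset (Fin n), fhat T * ∏ i ∈ T, chi (x i)) = fhat ∅ := by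
      intro x
      rw [Finset.sum_eq_single ∅]
      · simp
      · intro T _ hT
        rw [hmax T (Finset.empty_ssubset.mpr (Finset.nonempty_iff_ne_empty.mpr hT))]
        ring
      · simp
    have hfil : (univ.filter (fun x : Fin n → Bool =>
        |fhat ∅| ≤ |∑ T : Finset (Fin n), fhat T * ∏ i ∈ T, chi (x i)|)) = univ := by
      apply Finset.filter_true_of_mem
      intro x _; rw [hval x]
    rw [hfil, hsum]
    simp
  | succ k ih =>
    intro fhat I hcard hI hmax
    obtain ⟨i, hi⟩ : ∃ i, i ∈ I := Finset.card_pos.mp (by omega)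
    set g : Finset (Fin n) → ℝ := fun T => if i ∈ T then 0 else fhat (insert i T) with hgdef
    have hgI : g (I.erase i) = fhat I := by
      simp [hgdef, Finset.notMem_erase, Finset.insert_erase hi]
    have hcard' : (I.erase i).card = k := by
      rw [Finset.card_erase_of_mem hi, hcard]
      omega
    have hgmax : ∀ T, I.erase i ⊂ T → g T = 0 := by
      intro T hT
      by_cases hiT : i ∈ T
      · simp [hgdef, hiT]
      · simp only [hgdef, if_neg hiT]
        apply hmax
        obtain ⟨j, hjT, hjI⟩ := Finset.exists_of_ssubset hT
        have hji : j ≠ i := by rintro rfl; exact hiT hjT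
        constructor
        · intro a haI
          by_cases hai : a = i
          · subst hai; exact Finset.mem_insert_self _ _
          · exact Finset.mem_insert_of_mem (hT.subset (Finset.mem_erase.mpr ⟨hai, haI⟩))
        · intro hsub
          have : j ∈ I := hsub (Finset.mem_insert_of_mem hjT)
          exact hjI (Finset.mem_erase.mpr ⟨hji, this⟩)
    have hApre0 := ih g (I.erase i) hcard' (hgI ▸ hI) hgmax
    rw [hgI, hcard'] at hApre0
    set G : (Fin n → Bool) → ℝ :=
      fun x => ∑ T : Finset (Fin n), g T * ∏ j ∈ T, chi (x j) with hGdef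
    set Fv : (Fin n → Bool) → ℝ :=
      fun x => ∑ T : Finset (Fin n), fhat T * ∏ j ∈ T, chi (x j) with hFdef
    set c : ℝ := |fhat I| with hcdef
    have hApre : δ ^ k ≤ ∑ x ∈ univ.filter (fun x => c ≤ |G x|), p x := hApre0
    have hGupd : ∀ (x : Fin n → Bool) (b : Bool), G (Function.update x i b) = G x := by
      intro x b
      apply Finset.sum_congr rfl
      intro T _
      by_cases hiT : i ∈ T
      · simp [hgdef, hiT]
      · rw [prod_chi_update i x b hiT]
    have hkey : ∀ x : Fin n → Bool,
        Fv (Function.update x i true) - Fv (Function.update x i false) = 2 * G x := by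
      intro x
      have h1 : Fv (Function.update x i true) - Fv (Function.update x i false)
          = ∑ T : Finset (Fin n), fhat T *
              ((∏ j ∈ T, chi (Function.update x i true j))
                - ∏ j ∈ T, chi (Function.update x i false j)) := by
        simp [hFdef, ← Finset.sum_sub_distrib, mul_sub]
      have h2 : 2 * G x = ∑ T : Finset (Fin n), 2 * (g T * ∏ j ∈ T, chi (x j)) := by
        rw [hGdef, Finset.mul_sum]
      rw [h1, h2]
      rw [← Finset.sum_filter_add_sum_filter_not univ (fun T => i ∈ T)
            (fun T => fhat T * ((∏ j ∈ T, chi (Function.update x i true j))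
                - ∏ j ∈ T, chi (Function.update x i false j)))]
      rw [← Finset.sum_filter_add_sum_filter_not univ (fun T => i ∈ T)
            (fun T => 2 * (g T * ∏ j ∈ T, chi (x j)))]
      have hz1 : ∑ T ∈ univ.filter (fun T => ¬ i ∈ T),
          fhat T * ((∏ j ∈ T, chi (Function.update x i true j))
            - ∏ j ∈ T, chi (Function.update x i false j)) = 0 := by
        apply Finset.sum_eq_zero; intro T hT
        simp only [Finset.mem_filter] at hT
        rw [prod_chi_update i x true hT.2, prod_chi_update i x false hT.2]
        ring
      have hz2 : ∑ T ∈ univ.filter (fun T => i ∈ T),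
          2 * (g T * ∏ j ∈ T, chi (x j)) = 0 := by
        apply Finset.sum_eq_zero; intro T hT
        simp only [Finset.mem_filter] at hT
        simp [hgdef, hT.2]
      rw [hz1, hz2, add_zero, zero_add]
      refine Finset.sum_bij' (fun T _ => Finset.erase T i) (fun T _ => insert i T)
        ?_ ?_ ?_ ?_ ?_
      · intro T hT; simp
      · intro T hT; simp
      · intro T hT; simp only [Finset.mem_filter] at hT
        exact Finset.insert_erase hT.2
      · intro T hT; simp only [Finset.mem_filter] at hT
        exact Finset.erase_insert hT.2
      · intro T hT; simp only [Finset.mem_filter] at hT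
        have hiT := hT.2
        have e1 : ∏ j ∈ T, chi (Function.update x i true j)
            = ∏ j ∈ T.erase i, chi (x j) := by
          rw [← Finset.mul_prod_erase T _ hiT, Function.update_self,
              prod_chi_update i x true (Finset.notMem_erase i T)]
          show chi true * _ = _
          rw [show chi true = 1 from rfl, one_mul]
        have e2 : ∏ j ∈ T, chi (Function.update x i false j)
            = -∏ j ∈ T.erase i, chi (x j) := by
          rw [← Finset.mul_prod_erase T _ hiT, Function.update_self,
              prod_chi_update i x false (Finset.notMem_erase i T)]
          show chi false * _ = _
          rw [show chi false = -1 from rfl]; ring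
        have e3 : g (T.erase i) = fhat T := by
          simp [hgdef, Finset.notMem_erase, Finset.insert_erase hiT]
        rw [e1, e2, e3]; ring
    have step : δ * (∑ x ∈ univ.filter (fun x => c ≤ |G x|), p x)
        ≤ ∑ x ∈ univ.filter (fun x => c ≤ |Fv x|), p x := by
      rw [Finset.sum_filter, Finset.sum_filter]
      rw [sum_split_pair i (fun x => if c ≤ |G x| then p x else 0),
          sum_split_pair i (fun x => if c ≤ |Fv x| then p x else 0),
          Finset.mul_sum]
      apply Finset.sum_le_sum
      intro x hx
      simp only [Finset.mem_filter] at hx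
      have hxi : x i = true := hx.2
      have hxup : Function.update x i true = x := by
        rw [show true = x i from hxi.symm]; exact Function.update_eq_self i x
      have hG' : G (Function.update x i false) = G x := hGupd x false
      by_cases hAx : c ≤ |G x|
      · rw [if_pos hAx, if_pos (by rw [hG']; exact hAx)]
        have hkey' : Fv x - Fv (Function.update x i false) = 2 * G x := by
          have := hkey x; rwa [hxup] at this
        have hc0 : (0:ℝ) ≤ c := abs_nonneg _
        have hor : c ≤ |Fv x| ∨ c ≤ |Fv (Function.update x i false)| := by
          by_contra hcon
          push_neg at hcon
          have h2 : |2 * G x| ≤ |Fv x| + |Fv (Function.update x i false)| := by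
            rw [← hkey']; exact abs_sub _ _
          rw [abs_mul, show |(2:ℝ)| = 2 by norm_num] at h2
          linarith [hcon.1, hcon.2]
        have hnn1 : (0:ℝ) ≤ if c ≤ |Fv x| then p x else 0 := by
          split <;> [exact hp x; exact le_refl 0]
        have hnn2 : (0:ℝ) ≤ if c ≤ |Fv (Function.update x i false)|
            then p (Function.update x i false) else 0 := by
          split <;> [exact hp _; exact le_refl 0]
        cases hor with
        | inl h =>
          rw [if_pos h]
          have hu := (hunb i x).1
          rw [hxup] at hu
          linarith
        | inr h =>
          rw [if_pos h]
          have hu := (hunb i (Function.update x i false)).1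
          rw [Function.update_idem, Function.update_idem, hxup] at hu
          linarith
      · rw [if_neg hAx, if_neg (by rw [hG']; exact hAx)]
        have hnn1 : (0:ℝ) ≤ if c ≤ |Fv x| then p x else 0 := by
          split <;> [exact hp x; exact le_refl 0]
        have hnn2 : (0:ℝ) ≤ if c ≤ |Fv (Function.update x i false)|
            then p (Function.update x i false) else 0 := by
          split <;> [exact hp _; exact le_refl 0]
        linarith
    have hfinal : δ ^ I.card = δ * δ ^ k := by rw [hcard, pow_succ, mul_comm]
    rw [hfinal]
    calc δ * δ ^ k ≤ δ * ∑ x ∈ univ.filter (fun x => c ≤ |G x|), p x :=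
          mul_le_mul_of_nonneg_left hApre hδ
      _ ≤ _ := step
end

section
/- Let ψ(x) = β·x_1·x_3 + α·x_1·x_2·x_4 + β·x_2·x_5 on {-1,1}^5 with real parameters α, β, and let μ(x) ∝ exp(ψ(x)) be the Gibbs distribution. Then the marginal law of (X_3, X_4) under μ is uniform on {-1,1}^2. -/
open Finset

lemma sum_pi_succ {n : ℕ} (f : (Fin (n+1) → Bool) → ℝ) :
    ∑ x : Fin (n+1) → Bool, f x = ∑ b : Bool, ∑ y : Fin n → Bool, f (Fin.cons b y) := by
  rw [← (Fin.consEquiv (fun _ => Bool)).sum_comp, Fintype.sum_prod_type]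
  rfl

lemma sum_pi5 (f : (Fin 5 → Bool) → ℝ) :
    ∑ x : Fin 5 → Bool, f x
      = ∑ x0 : Bool, ∑ x1 : Bool, ∑ x2 : Bool, ∑ x3 : Bool, ∑ x4 : Bool,
          f ![x0, x1, x2, x3, x4] := by
  rw [sum_pi_succ]
  refine Fintype.sum_congr _ _ fun x0 => ?_
  rw [sum_pi_succ]
  refine Fintype.sum_congr _ _ fun x1 => ?_
  rw [sum_pi_succ]
  refine Fintype.sum_congr _ _ fun x2 => ?_
  rw [sum_pi_succ]
  refine Fintype.sum_congr _ _ fun x3 => ?_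
  rw [sum_pi_succ]
  refine Fintype.sum_congr _ _ fun x4 => ?_
  rw [Fintype.sum_unique]
  congr 1

/-- For the Hamiltonian `ψ(x) = β x₁ x₃ + α x₁ x₂ x₄ + β x₂ x₅` on `{-1,1}^5`
(coordinates indexed `0,…,4`), the marginal of the Gibbs measure `μ(x) ∝ exp(ψ(x))`
on `(X₃, X₄)` (coordinates `2` and `3`) is uniform on `{-1,1}²`. -/
theorem psi1_marginal_X3_X4_uniform (α β : ℝ) (a b : Bool) :
    (∑ x ∈ univ.filter (fun x : Fin 5 → Bool => x 2 = a ∧ x 3 = b),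
        Real.exp (β * chi (x 0) * chi (x 2) + α * chi (x 0) * chi (x 1) * chi (x 3)
          + β * chi (x 1) * chi (x 4))) /
      (∑ x : Fin 5 → Bool,
        Real.exp (β * chi (x 0) * chi (x 2) + α * chi (x 0) * chi (x 1) * chi (x 3)
          + β * chi (x 1) * chi (x 4))) = 1 / 4 := by
  rw [Finset.sum_filter, sum_pi5, sum_pi5]
  cases a <;> cases b <;>
    simp [chi, Fintype.sum_bool, Real.exp_add]
  all_goals rw [div_eq_iff (by positivity)]; ring
end
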